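/- Let 1 < q₂ ≤ q₁ < ∞ and set r = q₂(q₁−1)/(q₁(q₂−1)). For any nonzero z ∈ R^N, if s_{q₁}(z) ≤ s then s_{q₂}(z) ≤ s^r. (Inclusion of q-ratio sparsity sublevel sets.) -/

import Mathlib

open Finset Matrix

noncomputable def l1 {N : ℕ} (z : Fin N → ℝ) : ℝ := ∑ i, |z i|
noncomputable def lq {N : ℕ} (q : ℝ) (z : Fin N → ℝ) : ℝ := (∑ i, |z i| ^ q) ^ (1/q)
noncomputable def l2 {m : ℕ} (v : Fin m → ℝ) : ℝ := Real.sqrt (∑ i, (v i)^2)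
noncomputable def linf {N : ℕ} (z : Fin N → ℝ) : ℝ := ⨆ i, |z i|
open scoped Classical in
noncomputable def l0 {N : ℕ} (z : Fin N → ℝ) : ℕ := (Finset.univ.filter (fun i => z i ≠ 0)).card
noncomputable def sparsityQ {N : ℕ} (q : ℝ) (z : Fin N → ℝ) : ℝ := (l1 z / lq q z) ^ (q/(q-1))
noncomputable def cmsv {m N : ℕ} (q s : ℝ) (A : Matrix (Fin m) (Fin N) ℝ) : ℝ :=
  sInf { r | ∃ z : Fin N → ℝ, z ≠ 0 ∧ sparsityQ q z ≤ s ∧ r = l2 (A.mulVec z) / lq q z }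

lemma sum_rpow_pos {N : ℕ} {z : Fin N → ℝ} (hz : z ≠ 0) {q : ℝ} (hq : 0 < q) :
    0 < ∑ i, |z i| ^ q := by
  obtain ⟨i, hi⟩ : ∃ i, z i ≠ 0 := Function.ne_iff.mp hz
  apply Finset.sum_pos' (fun j _ => Real.rpow_nonneg (abs_nonneg _) _)
  exact ⟨i, Finset.mem_univ i, Real.rpow_pos_of_pos (abs_pos.mpr hi) q⟩

lemma lq_pos {N : ℕ} {z : Fin N → ℝ} (hz : z ≠ 0) {q : ℝ} (hq : 0 < q) :
    0 < lq q z :=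
  Real.rpow_pos_of_pos (sum_rpow_pos hz hq) _

lemma lq_anti {N : ℕ} {z : Fin N → ℝ} (hz : z ≠ 0) {q₁ q₂ : ℝ} (hq₂ : 0 < q₂)
    (hq : q₂ ≤ q₁) : lq q₁ z ≤ lq q₂ z := by
  have hq₁ : 0 < q₁ := lt_of_lt_of_le hq₂ hq
  set S₂ := ∑ i, |z i| ^ q₂ with hS₂
  have hS₂pos : 0 < S₂ := sum_rpow_pos hz hq₂
  have key : ∀ i : Fin N, |z i| ^ q₁ ≤ |z i| ^ q₂ * S₂ ^ ((q₁ - q₂)/q₂) := by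
    intro i
    rcases eq_or_lt_of_le (abs_nonneg (z i)) with h0 | h0
    · rw [← h0, Real.zero_rpow hq₁.ne', Real.zero_rpow hq₂.ne', zero_mul]
    · have hle : |z i| ≤ S₂ ^ (1/q₂) := by
        have h1 : |z i| ^ q₂ ≤ S₂ :=
          Finset.single_le_sum (fun j _ => Real.rpow_nonneg (abs_nonneg _) _)
            (Finset.mem_univ i)
        calc |z i| = (|z i| ^ q₂) ^ (1/q₂) := by
              rw [← Real.rpow_mul (abs_nonneg _), mul_one_div, div_self hq₂.ne', Real.rpow_one]
          _ ≤ S₂ ^ (1/q₂) :=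
              Real.rpow_le_rpow (Real.rpow_nonneg (abs_nonneg _) _) h1
                (by positivity)
      calc |z i| ^ q₁ = |z i| ^ q₂ * |z i| ^ (q₁ - q₂) := by
            rw [← Real.rpow_add h0]; ring_nf
        _ ≤ |z i| ^ q₂ * (S₂ ^ (1/q₂)) ^ (q₁ - q₂) := by
            apply mul_le_mul_of_nonneg_left _ (Real.rpow_nonneg (abs_nonneg _) _)
            exact Real.rpow_le_rpow h0.le hle (by linarith)
        _ = |z i| ^ q₂ * S₂ ^ ((q₁ - q₂)/q₂) := by
            rw [← Real.rpow_mul hS₂pos.le, one_div, inv_mul_eq_div]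
  have hsum : (∑ i, |z i| ^ q₁) ≤ S₂ ^ (q₁/q₂) := by
    calc (∑ i, |z i| ^ q₁) ≤ ∑ i, |z i| ^ q₂ * S₂ ^ ((q₁ - q₂)/q₂) :=
          Finset.sum_le_sum (fun i _ => key i)
      _ = S₂ * S₂ ^ ((q₁ - q₂)/q₂) := by rw [← Finset.sum_mul]
      _ = S₂ ^ (1 + (q₁ - q₂)/q₂) := by
          rw [Real.rpow_add hS₂pos, Real.rpow_one]
      _ = S₂ ^ (q₁/q₂) := by
          congr 1; field_simp; ring
  have : (∑ i, |z i| ^ q₁) ^ (1/q₁) ≤ (S₂ ^ (q₁/q₂)) ^ (1/q₁) :=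
    Real.rpow_le_rpow (Finset.sum_nonneg fun i _ => Real.rpow_nonneg (abs_nonneg _) _)
      hsum (by positivity)
  calc lq q₁ z ≤ (S₂ ^ (q₁/q₂)) ^ (1/q₁) := this
    _ = S₂ ^ (1/q₂) := by
        rw [← Real.rpow_mul hS₂pos.le]
        congr 1; field_simp
    _ = lq q₂ z := rfl

theorem stmt6 {N : ℕ} (z : Fin N → ℝ) (hz : z ≠ 0) (q₁ q₂ s r : ℝ)
    (hq₂ : 1 < q₂) (hq : q₂ ≤ q₁)
    (hr : r = q₂ * (q₁ - 1) / (q₁ * (q₂ - 1)))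
    (hs : sparsityQ q₁ z ≤ s) :
    sparsityQ q₂ z ≤ s ^ r := by
  have hq₁ : 1 < q₁ := lt_of_lt_of_le hq₂ hq
  have hq₂0 : (0:ℝ) < q₂ := by linarith
  have hq₁0 : (0:ℝ) < q₁ := by linarith
  have hlq₁ : 0 < lq q₁ z := lq_pos hz hq₁0
  have hlq₂ : 0 < lq q₂ z := lq_pos hz hq₂0
  have hl1 : 0 ≤ l1 z := Finset.sum_nonneg fun i _ => abs_nonneg _
  have hbase : l1 z / lq q₂ z ≤ l1 z / lq q₁ z := by
    gcongr
    exact lq_anti hz hq₂0 hq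
  have hbnn : 0 ≤ l1 z / lq q₁ z := div_nonneg hl1 hlq₁.le
  have hr0 : 0 < r := by
    rw [hr]
    apply div_pos <;> nlinarith
  have hexp : q₂/(q₂-1) = q₁/(q₁-1) * r := by
    rw [hr, div_mul_div_comm, div_eq_div_iff (ne_of_gt (by nlinarith [mul_pos hq₁0 (show (0:ℝ) < q₂-1 by linarith)])) (ne_of_gt (by nlinarith [mul_pos hq₁0 (show (0:ℝ) < q₂-1 by linarith)]))]
    ring
  calc sparsityQ q₂ z = (l1 z / lq q₂ z) ^ (q₂/(q₂-1)) := rfl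
    _ ≤ (l1 z / lq q₁ z) ^ (q₂/(q₂-1)) := by
        exact Real.rpow_le_rpow (div_nonneg hl1 hlq₂.le) hbase
          (div_nonneg hq₂0.le (by linarith))
    _ = ((l1 z / lq q₁ z) ^ (q₁/(q₁-1))) ^ r := by
        rw [← Real.rpow_mul hbnn, hexp]
    _ ≤ s ^ r := Real.rpow_le_rpow (Real.rpow_nonneg hbnn _) hs hr0.le
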